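/- For any two-qubit density operator ρ, the negativity satisfies N(ρ) := (‖ρ^{T_B}‖₁ − 1)/2 ≥ ⟨φ₀₀|ρ|φ₀₀⟩ − 1/2, where |φ₀₀⟩ = (|00⟩+|11⟩)/√2 and T_B denotes partial transpose on the second qubit. -/

import Mathlib

open Matrix Kronecker
open scoped ComplexOrder
open scoped Classical in
noncomputable def msqrt {n : Type*} [Fintype n] [DecidableEq n] (A : Matrix n n ℂ) : Matrix n n ℂ :=
  if h : A.PosSemidef then h.1.eigenvectorUnitary.1 * diagonal ((↑) ∘ Real.sqrt ∘ h.1.eigenvalues) *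
    (star h.1.eigenvectorUnitary : Matrix n n ℂ) else 0
noncomputable def fid {n : Type*} [Fintype n] [DecidableEq n] (ρ σ : Matrix n n ℂ) : ℝ :=
  ((msqrt (msqrt ρ * σ * msqrt ρ)).trace).re
def IsState {n : Type*} [Fintype n] [DecidableEq n] (ρ : Matrix n n ℂ) : Prop :=
  ρ.PosSemidef ∧ ρ.trace = 1
/-- Complete positivity via Kraus decomposition. -/
def IsCP {n m : Type*} [Fintype n] [DecidableEq n] [Fintype m] [DecidableEq m]
    (Φ : Matrix n n ℂ → Matrix m m ℂ) : Prop :=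
  ∃ (k : ℕ) (K : Fin k → Matrix m n ℂ), ∀ ρ, Φ ρ = ∑ i, K i * ρ * (K i)ᴴ
/-- Partial transpose on the second qubit. -/
def ptB (ρ : Matrix (Fin 2 × Fin 2) (Fin 2 × Fin 2) ℂ) : Matrix (Fin 2 × Fin 2) (Fin 2 × Fin 2) ℂ :=
  fun p q => ρ (p.1, q.2) (q.1, p.2)
/-- Trace norm. -/
noncomputable def traceNorm {n : Type*} [Fintype n] [DecidableEq n] (A : Matrix n n ℂ) : ℝ :=
  ((msqrt (Aᴴ * A)).trace).re
/-- The Bell state (|00⟩+|11⟩)/√2 as a vector. -/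
noncomputable def φ00 : Fin 2 × Fin 2 → ℂ := fun p => if p.1 = p.2 then ((Real.sqrt 2)⁻¹ : ℝ) else 0

noncomputable def Fswap : Matrix (Fin 2 × Fin 2) (Fin 2 × Fin 2) ℂ :=
  fun p q => if p = (q.2, q.1) then 1 else 0

lemma Fswap_star : star Fswap = Fswap := by
  ext p q
  fin_cases p <;> fin_cases q <;>
    simp [Fswap, Matrix.star_eq_conjTranspose, Matrix.conjTranspose_apply, Prod.ext_iff]

lemma Fswap_mul_self : Fswap * Fswap = 1 := by
  ext p q
  fin_cases p <;> fin_cases q <;>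
    simp [Fswap, Matrix.mul_apply, Fintype.sum_prod_type, Fin.sum_univ_two,
      Matrix.one_apply, Prod.ext_iff]

lemma Fswap_mem : Fswap ∈ Matrix.unitaryGroup (Fin 2 × Fin 2) ℂ := by
  rw [Matrix.mem_unitaryGroup_iff']
  rw [Fswap_star, Fswap_mul_self]

lemma trace_diagonal_mul {n : Type*} [Fintype n] [DecidableEq n]
    (d : n → ℂ) (M : Matrix n n ℂ) :
    (Matrix.diagonal d * M).trace = ∑ i, d i * M i i := by
  simp [Matrix.trace, Matrix.diag]

lemma conj_mul_conj {n : Type*} [Fintype n] [DecidableEq n] (U V W : Matrix n n ℂ)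
    (h : star U * U = 1) :
    (U * V * star U) * (U * W * star U) = U * (V * W) * star U := by
  have h2 : star U * (U * (W * star U)) = W * star U := by
    rw [← Matrix.mul_assoc, h, Matrix.one_mul]
  simp only [Matrix.mul_assoc, h2]

theorem negativity_lower_bound (ρ : Matrix (Fin 2 × Fin 2) (Fin 2 × Fin 2) ℂ)
    (hρ : IsState ρ) :
    (traceNorm (ptB ρ) - 1) / 2 ≥ (star φ00 ⬝ᵥ ρ.mulVec φ00).re - 1 / 2 := by
  obtain ⟨hpsd, htr⟩ := hρ
  have hconj : ∀ x y, ρ x y = star (ρ y x) := by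
    intro x y
    conv_lhs => rw [← hpsd.1]
    simp [Matrix.conjTranspose_apply]
  set A := ptB ρ with hAdef
  have hherm : A.IsHermitian := by
    ext p q
    rw [Matrix.conjTranspose_apply]
    show star (ρ (q.1, p.2) (p.1, q.2)) = ρ (p.1, q.2) (q.1, p.2)
    rw [hconj (p.1, q.2) (q.1, p.2)]
  set U : Matrix (Fin 2 × Fin 2) (Fin 2 × Fin 2) ℂ := hherm.eigenvectorUnitary.1 with hUdef
  set lam := hherm.eigenvalues with hlamdef
  have hUmem : (U : Matrix (Fin 2 × Fin 2) (Fin 2 × Fin 2) ℂ) ∈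
      Matrix.unitaryGroup (Fin 2 × Fin 2) ℂ := hherm.eigenvectorUnitary.2
  have hU1 : star U * U = 1 := (Unitary.mem_iff.mp hUmem).1
  have hU2 : U * star U = 1 := (Unitary.mem_iff.mp hUmem).2
  have hspec : A = U * Matrix.diagonal (RCLike.ofReal ∘ lam) * star U :=
    hherm.spectral_theorem
  set Dabs : Matrix (Fin 2 × Fin 2) (Fin 2 × Fin 2) ℂ :=
    Matrix.diagonal (fun i => ((|lam i| : ℝ) : ℂ)) with hDdef
  set B := U * Dabs * star U with hBdef
  have hBpsd : B.PosSemidef := by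
    have hd : (Matrix.diagonal (fun i => ((|lam i| : ℝ) : ℂ))).PosSemidef := by
      refine Matrix.posSemidef_diagonal_iff.mpr fun i => ?_
      simpa using Complex.zero_le_real.mpr (abs_nonneg _)
    have := hd.mul_mul_conjTranspose_same U
    rwa [← Matrix.star_eq_conjTranspose] at this
  have hsq : B ^ 2 = Aᴴ * A := by
    rw [pow_two, hBdef, conj_mul_conj _ _ _ hU1, hherm.eq]
    conv_rhs => rw [hspec]
    rw [conj_mul_conj _ _ _ hU1]
    congr 2
    rw [Matrix.diagonal_mul_diagonal, Matrix.diagonal_mul_diagonal]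
    congr 1
    funext i
    simp [← Complex.ofReal_mul, abs_mul_abs_self]
  have hpsdAA := Matrix.posSemidef_conjTranspose_mul_self A
  have hmsqrt : msqrt (Aᴴ * A) = B := by
    rw [msqrt, dif_pos hpsdAA]
    open scoped MatrixOrder in
    have key : CFC.sqrt (Aᴴ * A) = B :=
      CFC.sqrt_unique (by rw [← pow_two]; exact hsq) hBpsd.nonneg
    open scoped MatrixOrder in
    rw [CFC.sqrt_eq_real_sqrt _ hpsdAA.nonneg, cfcₙ_eq_cfc (hf0 := Real.sqrt_zero), hpsdAA.1.cfc_eq] at key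
    simpa [Matrix.IsHermitian.cfc, Function.comp_def] using key
  have htrB : traceNorm A = ∑ i, |lam i| := by
    rw [traceNorm, hmsqrt, hBdef, Matrix.trace_mul_cycle, hU1, Matrix.one_mul,
      Matrix.trace_diagonal]
    simp
  set M := star U * Fswap * U with hMdef
  have hMmem : M ∈ Matrix.unitaryGroup (Fin 2 × Fin 2) ℂ :=
    mul_mem (mul_mem (Unitary.star_mem hUmem) Fswap_mem) hUmem
  have hMstar : star M * M = 1 := (Unitary.mem_iff.mp hMmem).1
  have hMbound : ∀ i, ‖M i i‖ ≤ 1 := by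
    intro i
    have h1 : (star M * M) i i = 1 := by rw [hMstar]; simp [Matrix.one_apply]
    have h2 : ∑ j, Complex.normSq (M j i) = 1 := by
      have := congrArg Complex.re h1
      rw [Matrix.mul_apply] at this
      rw [Complex.re_sum] at this
      simpa [Matrix.star_eq_conjTranspose, Matrix.conjTranspose_apply, Complex.mul_re,
        Complex.normSq_apply] using this
    have h3 : Complex.normSq (M i i) ≤ 1 := by
      calc Complex.normSq (M i i) ≤ ∑ j, Complex.normSq (M j i) :=
            Finset.single_le_sum (f := fun j => Complex.normSq (M j i))
              (fun j _ => Complex.normSq_nonneg _) (Finset.mem_univ i)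
        _ = 1 := h2
    rw [Complex.norm_def]
    calc Real.sqrt (Complex.normSq (M i i)) ≤ Real.sqrt 1 := Real.sqrt_le_sqrt h3
      _ = 1 := Real.sqrt_one
  have htrace : (A * Fswap).trace = ∑ i, (lam i : ℂ) * M i i := by
    conv_lhs => rw [hspec]
    rw [Matrix.mul_assoc (U * Matrix.diagonal (RCLike.ofReal ∘ lam)) (star U) Fswap,
      Matrix.trace_mul_comm, ← Matrix.mul_assoc,
      Matrix.trace_mul_comm, trace_diagonal_mul]
    rfl
  have hbound : ((A * Fswap).trace).re ≤ ∑ i, |lam i| := by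
    rw [htrace, Complex.re_sum]
    apply Finset.sum_le_sum
    intro i _
    rw [Complex.re_ofReal_mul]
    calc lam i * (M i i).re ≤ |lam i * (M i i).re| := le_abs_self _
      _ = |lam i| * |(M i i).re| := abs_mul _ _
      _ ≤ |lam i| * 1 := by
          refine mul_le_mul_of_nonneg_left ?_ (abs_nonneg _)
          exact le_trans (Complex.abs_re_le_norm _) (hMbound i)
      _ = |lam i| := mul_one _
  have htrF : (A * Fswap).trace = ∑ p : Fin 2 × Fin 2, A p (p.2, p.1) := by
    simp [Matrix.trace, Matrix.diag, Matrix.mul_apply, Fswap, mul_ite, mul_one, mul_zero,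
      Finset.sum_ite_eq']
  have hc : (((Real.sqrt 2)⁻¹ : ℝ) : ℂ) * (((Real.sqrt 2)⁻¹ : ℝ) : ℂ) = 1/2 := by
    rw [← Complex.ofReal_mul, ← mul_inv, Real.mul_self_sqrt (by norm_num)]
    norm_num
  have hdot : (2:ℂ) * (star φ00 ⬝ᵥ ρ.mulVec φ00) = (A * Fswap).trace := by
    rw [htrF]
    simp only [dotProduct, Matrix.mulVec, φ00, Pi.star_apply, Fintype.sum_prod_type,
      Fin.sum_univ_two, hAdef, ptB]
    norm_num [Complex.star_def, Complex.conj_ofReal]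
    simp only [Complex.ofReal_inv] at hc ⊢
    linear_combination (2 * (ρ (0, 0) (0, 0) + ρ (0, 0) (1, 1) + ρ (1, 1) (0, 0) + ρ (1, 1) (1, 1))) * hc
  have hre : 2 * (star φ00 ⬝ᵥ ρ.mulVec φ00).re = ((A * Fswap).trace).re := by
    have := congrArg Complex.re hdot
    simpa [Complex.mul_re] using this
  rw [ge_iff_le]
  linarith [hbound, hre, htrB]
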